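/- Let c, p : [0,∞) → ℝ be differentiable and satisfy c' = k1(e0 − c)(s0 − c − p) − k1·K_M·c and p' = k2·c, with c(0) = 0 and p(0) = 0, where k1, k−1, k2, e0, s0 > 0 and K_M = (k−1+k2)/k1. Assume 0 ≤ c(t) ≤ min(λ, e0) and 0 ≤ p(t) ≤ s0 for all t ≥ 0, where λ = ½(e0+K_M+s0) − ½√((e0+K_M+s0)² − 4e0·s0). Then the error E_c(t) = c(t) − e0(s0 − p(t))/(K_M + s0 − p(t)) satisfies |E_c(t)| ≤ |E_c(0)|·exp(−k1·K_M·t/2) + (1/(k1·K_M))·(k1·e0²/4 + e0·k2·λ/K_M) for all t ≥ 0. -/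

import Mathlib

open Set intervalIntegral MeasureTheory

/-- energy bound on the error of the standard QSSA expression for the
complex concentration, in the (p,c) phase plane. -/

private lemma aux_lower (k g e0 : ℝ) (hk : 0 ≤ k) : -(k * e0 ^ 2 / 4) ≤ k * g * (g - e0) := by
  nlinarith [mul_nonneg hk (sq_nonneg (g - e0 / 2))]

private lemma aux_young (a b r : ℝ) (ha : 0 < a) : 2 * (b * r) ≤ a * b ^ 2 + r ^ 2 / a := by
  have h2 : a * (r ^ 2 / a) = r ^ 2 := mul_div_cancel₀ _ (ne_of_gt ha)
  have key : a * (2 * (b * r)) ≤ a * (a * b ^ 2 + r ^ 2 / a) := by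
    nlinarith [sq_nonneg (a * b - r), h2]
  exact le_of_mul_le_mul_left key ha

private lemma aux_final (x y ε q Kc : ℝ) (hx2 : x ^ 2 ≤ (y ^ 2 - Kc) * ε ^ 2 + Kc)
    (hKc : Kc = q ^ 2) (hy : 0 ≤ y) (hε : 0 ≤ ε) (hq : 0 ≤ q) :
    x ^ 2 ≤ (y * ε + q) ^ 2 := by
  nlinarith [mul_nonneg (mul_nonneg hy hε) hq, mul_nonneg (sq_nonneg q) (sq_nonneg ε)]

set_option maxHeartbeats 1000000 in
theorem sQSSA_complex_error_bound (k1 km1 k2 e0 s0 KM lam : ℝ)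
    (hk1 : 0 < k1) (hkm1 : 0 < km1) (hk2 : 0 < k2) (he0 : 0 < e0) (hs0 : 0 < s0)
    (hKM : KM = (km1 + k2) / k1)
    (hlam : lam = (e0 + KM + s0) / 2 - Real.sqrt ((e0 + KM + s0) ^ 2 - 4 * e0 * s0) / 2)
    (c p : ℝ → ℝ)
    (hc : ∀ t : ℝ, 0 ≤ t →
      HasDerivAt c (k1 * (e0 - c t) * (s0 - c t - p t) - k1 * KM * c t) t)
    (hp : ∀ t : ℝ, 0 ≤ t → HasDerivAt p (k2 * c t) t)
    (hc0 : c 0 = 0) (hp0 : p 0 = 0)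
    (hcb : ∀ t : ℝ, 0 ≤ t → 0 ≤ c t ∧ c t ≤ min lam e0)
    (hpb : ∀ t : ℝ, 0 ≤ t → 0 ≤ p t ∧ p t ≤ s0) :
    ∀ t : ℝ, 0 ≤ t →
      |c t - e0 * (s0 - p t) / (KM + s0 - p t)| ≤
        |c 0 - e0 * (s0 - p 0) / (KM + s0 - p 0)| * Real.exp (-(k1 * KM * t) / 2)
          + (1 / (k1 * KM)) * (k1 * e0 ^ 2 / 4 + e0 * k2 * lam / KM) := by
  have hKMpos : 0 < KM := by rw [hKM]; positivity
  have hk1KM : k1 * KM = km1 + k2 := by rw [hKM]; field_simp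
  have hαpos : 0 < k1 * KM := mul_pos hk1 hKMpos
  have hlam0 : 0 ≤ lam := by
    have h1 := (hcb 0 le_rfl).1
    have h2 := (hcb 0 le_rfl).2
    have := le_trans h1 h2
    exact le_trans this (min_le_left _ _)
  -- denominator bounds
  have hD : ∀ t : ℝ, 0 ≤ t → KM ≤ KM + s0 - p t := by
    intro t ht; have := (hpb t ht).2; linarith
  have hDpos : ∀ t : ℝ, 0 ≤ t → 0 < KM + s0 - p t := fun t ht =>
    lt_of_lt_of_le hKMpos (hD t ht)
  -- Step 1: the substrate concentration stays nonnegative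
  have hs_pos : ∀ t : ℝ, 0 ≤ t → 0 ≤ s0 - c t - p t := by
    intro T hT
    set f : ℝ → ℝ := fun x => k1 * (e0 - c x) with hf
    have hfc : ∀ x : ℝ, 0 ≤ x → ContinuousAt f x := fun x hx =>
      continuousAt_const.mul (continuousAt_const.sub (hc x hx).continuousAt)
    have hfint : IntegrableOn f (uIcc 0 T) := by
      rw [uIcc_of_le hT]
      have hco : ContinuousOn f (Icc 0 T) := fun x hx => (hfc x hx.1).continuousWithinAt
      exact hco.integrableOn_Icc
    set F : ℝ → ℝ := fun u => ∫ x in (0:ℝ)..u, f x with hF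
    have hFcont : ContinuousOn F (Icc 0 T) := by
      have := continuousOn_primitive_interval (f := f) (a := (0:ℝ)) (b := T) (μ := volume) hfint
      rwa [uIcc_of_le hT] at this
    have hFderiv : ∀ u : ℝ, 0 < u → HasDerivAt F (f u) u := by
      intro u hu
      apply integral_hasDerivAt_right
      · apply ContinuousOn.intervalIntegrable
        rw [uIcc_of_le hu.le]
        exact fun x hx => (hfc x hx.1).continuousWithinAt
      · exact ContinuousOn.stronglyMeasurableAtFilter isOpen_Ioi
          (fun x hx => (hfc x (le_of_lt hx)).continuousWithinAt) u hu
      · exact hfc u hu.le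
    set y : ℝ → ℝ := fun u => (s0 - c u - p u) * Real.exp (F u) with hy
    have hyderiv : ∀ u : ℝ, 0 < u → HasDerivAt y (km1 * c u * Real.exp (F u)) u := by
      intro u hu
      have hs' : HasDerivAt (fun v => s0 - c v - p v)
          ((0 - (k1 * (e0 - c u) * (s0 - c u - p u) - k1 * KM * c u)) - k2 * c u) u :=
        ((hasDerivAt_const u s0).sub (hc u hu.le)).sub (hp u hu.le)
      have hexp : HasDerivAt (fun v => Real.exp (F v)) (Real.exp (F u) * f u) u :=
        (hFderiv u hu).exp
      have := hs'.mul hexp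
      refine this.congr_deriv (Eq.symm ?_)
      simp only [hf]
      linear_combination (-(Real.exp (F u) * c u)) * hk1KM
    have hmono : MonotoneOn y (Icc 0 T) := by
      apply monotoneOn_of_deriv_nonneg (convex_Icc 0 T)
      · apply ContinuousOn.mul
        · exact fun x hx => (continuousAt_const.sub (hc x hx.1).continuousAt).continuousWithinAt.sub
            ((hp x hx.1).continuousAt.continuousWithinAt)
        · exact Real.continuous_exp.comp_continuousOn hFcont
      · rw [interior_Icc]
        exact fun x hx => ((hyderiv x hx.1).differentiableAt).differentiableWithinAt
      · rw [interior_Icc]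
        intro x hx
        rw [(hyderiv x hx.1).deriv]
        have := (hcb x hx.1.le).1
        positivity
    have h0T : y 0 ≤ y T := hmono (left_mem_Icc.2 hT) (right_mem_Icc.2 hT) hT
    have hy0 : y 0 = s0 := by simp [hy, hF, hc0, hp0]
    rw [hy0] at h0T
    by_contra h
    push_neg at h
    have : y T < 0 := mul_neg_of_neg_of_pos (by linarith) (Real.exp_pos _)
    linarith
  -- main setup
  set E : ℝ → ℝ := fun u => c u - e0 * (s0 - p u) / (KM + s0 - p u) with hE
  set r : ℝ := k1 * e0 ^ 2 / 4 + e0 * k2 * lam / KM with hr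
  have hr0 : 0 ≤ r := by rw [hr]; positivity
  set Kc : ℝ := r ^ 2 / ((k1 * KM) * (k1 * KM)) with hKc
  have hKc0 : 0 ≤ Kc := by rw [hKc]; positivity
  -- derivative of E at each t ≥ 0
  set Ed : ℝ → ℝ := fun u =>
    (k1 * (e0 - c u) * (s0 - c u - p u) - k1 * KM * c u)
      - (-(e0 * (k2 * c u)) * (KM + s0 - p u) - e0 * (s0 - p u) * (0 - k2 * c u))
        / (KM + s0 - p u) ^ 2 with hEd
  have hEderiv : ∀ t : ℝ, 0 ≤ t → HasDerivAt E (Ed t) t := by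
    intro t ht
    have hnum : HasDerivAt (fun u => e0 * (s0 - p u)) (e0 * (0 - k2 * c t)) t :=
      ((hasDerivAt_const t s0).sub (hp t ht)).const_mul e0
    have hden : HasDerivAt (fun u => KM + s0 - p u) (0 - k2 * c t) t :=
      (hasDerivAt_const t (KM + s0)).sub (hp t ht)
    have hq := hnum.div hden (ne_of_gt (hDpos t ht))
    have := (hc t ht).sub hq
    refine this.congr_deriv (Eq.symm ?_)
    simp only [hEd]
    ring
  -- key pointwise differential inequality
  have hkey : ∀ t : ℝ, 0 ≤ t →
      2 * E t * Ed t + (k1 * KM) * (E t) ^ 2 ≤ (k1 * KM) * Kc := by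
    intro t ht
    have hDt := hDpos t ht
    have hDt' := hD t ht
    have hp2 := (hpb t ht).2
    have hp1 := (hpb t ht).1
    have hc1 := (hcb t ht).1
    have hclam : c t ≤ lam := le_trans (hcb t ht).2 (min_le_left _ _)
    have hcs : c t ≤ s0 - p t := by have := hs_pos t ht; linarith
    set g : ℝ := e0 * (s0 - p t) / (KM + s0 - p t) with hg
    have hgDen : g * (KM + s0 - p t) = e0 * (s0 - p t) := by
      rw [hg]; field_simp
    have hg0 : 0 ≤ g := by
      rw [hg]; apply div_nonneg _ hDt.le
      have : 0 ≤ s0 - p t := by linarith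
      positivity
    have hge0 : g ≤ e0 := by
      rw [hg, div_le_iff₀ hDt]
      linarith [mul_nonneg he0.le hKMpos.le]
    -- decompose the derivative
    set A : ℝ := c t + g + p t - e0 - KM - s0 with hA
    set R : ℝ := k1 * g * (g - e0) + e0 * KM * (k2 * c t) / (KM + s0 - p t) ^ 2 with hR
    have hdecomp : Ed t = k1 * A * E t + R := by
      simp only [hEd, hA, hR, hE, hg]
      field_simp
      ring
    have hAle : A ≤ -KM := by rw [hA]; linarith
    -- bounds on R
    have hX : e0 * KM * (k2 * c t) / (KM + s0 - p t) ^ 2 ≤ e0 * k2 * lam / KM := by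
      rw [div_le_div_iff₀ (by positivity) hKMpos]
      have h1 : c t * KM ^ 2 ≤ lam * (KM + s0 - p t) ^ 2 :=
        mul_le_mul hclam (pow_le_pow_left₀ hKMpos.le hDt' 2) (by positivity) hlam0
      calc e0 * KM * (k2 * c t) * KM = e0 * k2 * (c t * KM ^ 2) := by ring
        _ ≤ e0 * k2 * (lam * (KM + s0 - p t) ^ 2) :=
            mul_le_mul_of_nonneg_left h1 (by positivity)
        _ = e0 * k2 * lam * (KM + s0 - p t) ^ 2 := by ring
    have hX0 : 0 ≤ e0 * KM * (k2 * c t) / (KM + s0 - p t) ^ 2 := by positivity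
    have hq14 : (0:ℝ) ≤ k1 * e0 ^ 2 / 4 := by positivity
    have hq24 : (0:ℝ) ≤ e0 * k2 * lam / KM := by positivity
    have hRle : R ≤ r := by
      rw [hR, hr]
      have hup : k1 * g * (g - e0) ≤ 0 :=
        mul_nonpos_of_nonneg_of_nonpos (mul_nonneg hk1.le hg0) (by linarith)
      linarith [hX]
    have hRge : -r ≤ R := by
      rw [hR, hr]
      linarith [aux_lower k1 g e0 hk1.le, hX0]
    have hER : E t * R ≤ |E t| * r := by
      calc E t * R ≤ |E t * R| := le_abs_self _
        _ = |E t| * |R| := abs_mul _ _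
        _ ≤ |E t| * r := by
            apply mul_le_mul_of_nonneg_left _ (abs_nonneg _)
            exact abs_le.2 ⟨hRge, hRle⟩
    have hAE : k1 * A * (E t) ^ 2 ≤ -(k1 * KM) * (E t) ^ 2 := by
      apply mul_le_mul_of_nonneg_right _ (sq_nonneg _)
      have := mul_le_mul_of_nonneg_left hAle hk1.le
      linarith
    have hKc2 : r ^ 2 / (k1 * KM) = (k1 * KM) * Kc := by
      rw [hKc]; field_simp
    have hyoung : 2 * (|E t| * r) ≤ (k1 * KM) * (E t) ^ 2 + (k1 * KM) * Kc := by
      have := aux_young (k1 * KM) |E t| r hαpos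
      rw [sq_abs, hKc2] at this
      exact this
    have expand : 2 * E t * Ed t = 2 * (k1 * A * (E t) ^ 2) + 2 * (E t * R) := by
      rw [hdecomp]; ring
    rw [expand]
    linarith only [hER, hAE, hyoung]
  -- Gronwall via monotonicity of W
  intro t ht
  set W : ℝ → ℝ := fun u => ((E u) ^ 2 - Kc) * Real.exp (k1 * KM * u) with hW
  have hWderiv : ∀ u : ℝ, 0 ≤ u →
      HasDerivAt W ((2 * E u * Ed u) * Real.exp (k1 * KM * u)
        + ((E u) ^ 2 - Kc) * (Real.exp (k1 * KM * u) * (k1 * KM))) u := by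
    intro u hu
    have hV : HasDerivAt (fun v => (E v) ^ 2 - Kc) (2 * E u * Ed u) u := by
      have h2 := ((hEderiv u hu).pow 2).sub (hasDerivAt_const u Kc)
      refine h2.congr_deriv (Eq.symm ?_)
      simp
    have hlin : HasDerivAt (fun v : ℝ => k1 * KM * v) (k1 * KM) u := by
      simpa using (hasDerivAt_id u).const_mul (k1 * KM)
    exact hV.mul hlin.exp
  have hanti : AntitoneOn W (Icc 0 t) := by
    apply antitoneOn_of_deriv_nonpos (convex_Icc 0 t)
    · intro x hx
      exact ((hWderiv x hx.1).continuousAt).continuousWithinAt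
    · rw [interior_Icc]
      exact fun x hx => ((hWderiv x hx.1.le).differentiableAt).differentiableWithinAt
    · rw [interior_Icc]
      intro x hx
      rw [(hWderiv x hx.1.le).deriv]
      have hk := hkey x hx.1.le
      have hepos := Real.exp_pos (k1 * KM * x)
      have : (2 * E x * Ed x) * Real.exp (k1 * KM * x)
          + ((E x) ^ 2 - Kc) * (Real.exp (k1 * KM * x) * (k1 * KM))
          = Real.exp (k1 * KM * x)
            * (2 * E x * Ed x + (k1 * KM) * (E x) ^ 2 - (k1 * KM) * Kc) := by ring
      rw [this]
      exact mul_nonpos_of_nonneg_of_nonpos hepos.le (by linarith)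
  have hWt : W t ≤ W 0 := hanti (left_mem_Icc.2 ht) (right_mem_Icc.2 ht) ht
  -- unpack the conclusion
  set ε : ℝ := Real.exp (-(k1 * KM * t) / 2) with hε
  have hεpos : 0 < ε := Real.exp_pos _
  have hεexp : Real.exp (k1 * KM * t) * ε ^ 2 = 1 := by
    rw [hε, sq, ← Real.exp_add, ← Real.exp_add,
      show k1 * KM * t + (-(k1 * KM * t) / 2 + -(k1 * KM * t) / 2) = 0 by ring, Real.exp_zero]
  have hW0 : W 0 = (E 0) ^ 2 - Kc := by simp [hW]
  rw [hW0] at hWt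
  have hW2 : (E t) ^ 2 ≤ ((E 0) ^ 2 - Kc) * ε ^ 2 + Kc := by
    have hm := mul_le_mul_of_nonneg_right hWt (sq_nonneg ε)
    have : ((E t) ^ 2 - Kc) * Real.exp (k1 * KM * t) * ε ^ 2
        = (E t) ^ 2 - Kc := by
      calc ((E t) ^ 2 - Kc) * Real.exp (k1 * KM * t) * ε ^ 2
          = ((E t) ^ 2 - Kc) * (Real.exp (k1 * KM * t) * ε ^ 2) := by ring
        _ = (E t) ^ 2 - Kc := by rw [hεexp]; ring
    rw [this] at hm
    linarith
  have hKcsq : Kc = ((1 / (k1 * KM)) * r) ^ 2 := by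
    rw [hKc]; field_simp
  show |E t| ≤ |E 0| * ε + 1 / (k1 * KM) * r
  apply abs_le_of_sq_le_sq _ (by positivity)
  have hW2' : (E t) ^ 2 ≤ (|E 0| ^ 2 - Kc) * ε ^ 2 + Kc := by
    rw [sq_abs]; exact hW2
  exact aux_final (E t) |E 0| ε (1 / (k1 * KM) * r) Kc hW2' hKcsq (abs_nonneg _)
    hεpos.le (by positivity)
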